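/- arXiv:2605.17696 — 6 statements merged into one kernel-verified Lean document; each statement's English description precedes it below -/
import Mathlib

section
/- Let k be a field of characteristic zero, V a finite-dimensional k-vector space, and D a right double Poisson bracket on the tensor algebra T(V) which is linear, i.e. D(a,b) ∈ k·1⊗V + V⊗k·1 for all a,b ∈ V. Then there exists a unique bilinear map μ : V×V → V such that D(a,b) = 1⊗μ(a,b) − μ(b,a)⊗1 for all a,b ∈ V, and μ is a left pre-Lie product on V, i.e. μ(μ(a,b),c) − μ(a,μ(b,c)) = μ(μ(b,a),c) − μ(b,μ(a,c)) for all a,b,c ∈ V. -/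
open TensorProduct

noncomputable section

namespace DoubleBrackets

variable (k : Type*) [Field k] (A : Type*) [Ring A] [Algebra k A]

/-- The flip `τ : A ⊗ A → A ⊗ A`, `x ⊗ y ↦ y ⊗ x`. -/
def tau : (A ⊗[k] A) →ₗ[k] (A ⊗[k] A) := (TensorProduct.comm k A A).toLinearMap

/-- `(12)·(x⊗y⊗z) = y⊗x⊗z`. -/
def p12 : (A ⊗[k] (A ⊗[k] A)) →ₗ[k] (A ⊗[k] (A ⊗[k] A)) :=
  (TensorProduct.assoc k A A A).toLinearMap
    ∘ₗ TensorProduct.map (tau k A) LinearMap.id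
    ∘ₗ (TensorProduct.assoc k A A A).symm.toLinearMap

/-- `(123)·(x⊗y⊗z) = z⊗x⊗y`. -/
def p123 : (A ⊗[k] (A ⊗[k] A)) →ₗ[k] (A ⊗[k] (A ⊗[k] A)) :=
  (TensorProduct.comm k (A ⊗[k] A) A).toLinearMap ∘ₗ (TensorProduct.assoc k A A A).symm.toLinearMap

/-- `(132)·(x⊗y⊗z) = y⊗z⊗x`. -/
def p132 : (A ⊗[k] (A ⊗[k] A)) →ₗ[k] (A ⊗[k] (A ⊗[k] A)) :=
  (TensorProduct.assoc k A A A).toLinearMap ∘ₗ (TensorProduct.comm k A (A ⊗[k] A)).toLinearMap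

/-- For a bilinear map `D : A × A → A ⊗ A` and `a ∈ A`, the map
`x ⊗ y ↦ D(a,x) ⊗ y : A ⊗ A → A ⊗ A ⊗ A`, used to form `D(a, D'(b,c)) ⊗ D''(b,c)`. -/
def applyLeft (D : A →ₗ[k] (A →ₗ[k] (A ⊗[k] A))) (a : A) :
    (A ⊗[k] A) →ₗ[k] (A ⊗[k] (A ⊗[k] A)) :=
  (TensorProduct.assoc k A A A).toLinearMap ∘ₗ TensorProduct.map (D a) LinearMap.id

/-- The double Jacobiator
`Jac_D(a,b,c) = D(a,D'(b,c))⊗D''(b,c) + (123)·(D(b,D'(c,a))⊗D''(c,a)) + (132)·(D(c,D'(a,b))⊗D''(a,b))`. -/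
def Jac (D : A →ₗ[k] (A →ₗ[k] (A ⊗[k] A))) (a b c : A) : A ⊗[k] (A ⊗[k] A) :=
  applyLeft k A D a (D b c)
    + p123 k A (applyLeft k A D b (D c a))
    + p132 k A (applyLeft k A D c (D a b))

/-- `D` is a right double bracket: skew-symmetry `D(a,b) = -τ D(b,a)` and the right Leibniz rule
`D(a,bc) = D'(a,b) ⊗ D''(a,b)c + D'(a,c) ⊗ bD''(a,c)`. -/
def IsRightDoubleBracket (D : A →ₗ[k] (A →ₗ[k] (A ⊗[k] A))) : Prop :=
  (∀ a b : A, D a b = - tau k A (D b a)) ∧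
  (∀ a b c : A, D a (b * c) =
      TensorProduct.map LinearMap.id (LinearMap.mulRight k c) (D a b)
      + TensorProduct.map LinearMap.id (LinearMap.mulLeft k b) (D a c))

/-- `D` is a right double Poisson bracket:
`Jac_D(a,b,c) - (12)·Jac_D(b,a,c) = 0` for all `a,b,c`. -/
def IsRightDoublePoissonBracket (D : A →ₗ[k] (A →ₗ[k] (A ⊗[k] A))) : Prop :=
  IsRightDoubleBracket k A D ∧
  ∀ a b c : A, Jac k A D a b c - p12 k A (Jac k A D b a c) = 0

end DoubleBrackets

open DoubleBrackets TensorAlgebra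

namespace PreLieAux

variable (k : Type*) [Field k] (V : Type*) [AddCommGroup V] [Module k V]

/-- Extraction of the degree-0 coefficient of the tensor algebra. -/
def e0 : TensorAlgebra k V →ₗ[k] k := (TensorAlgebra.algebraMapInv (M := V)).toLinearMap

@[simp] lemma e0_one : e0 k V (1 : TensorAlgebra k V) = 1 := by simp [e0]

@[simp] lemma e0_ι (v : V) : e0 k V (TensorAlgebra.ι k v) = 0 := by
  simp [e0, TensorAlgebra.algebraMapInv]

@[simp] lemma e1_one : TensorAlgebra.ιInv (1 : TensorAlgebra k V) = (0 : V) := by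
  letI : Module kᵐᵒᵖ V := Module.compHom _ ((RingHom.id k).fromOpposite mul_comm)
  haveI : IsCentralScalar k V := ⟨fun r m => rfl⟩
  simp [TensorAlgebra.ιInv]

@[simp] lemma e1_ι (v : V) : TensorAlgebra.ιInv (TensorAlgebra.ι k v) = v :=
  TensorAlgebra.ι_leftInverse v

/-- `E (x ⊗ y) = e0(x) • ιInv(y)`, extracting the `1 ⊗ V` component. -/
def E : TensorAlgebra k V ⊗[k] TensorAlgebra k V →ₗ[k] V :=
  (TensorProduct.lid k V).toLinearMap ∘ₗ TensorProduct.map (e0 k V) TensorAlgebra.ιInv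

@[simp] lemma E_tmul (x y : TensorAlgebra k V) :
    E k V (x ⊗ₜ[k] y) = e0 k V x • TensorAlgebra.ιInv y := by
  simp [E]

/-- `E3 (x ⊗ y ⊗ z) = e0(x) • e0(y) • ιInv(z)`, extracting the `1 ⊗ 1 ⊗ V` component. -/
def E3 : TensorAlgebra k V ⊗[k] (TensorAlgebra k V ⊗[k] TensorAlgebra k V) →ₗ[k] V :=
  (TensorProduct.lid k V).toLinearMap ∘ₗ TensorProduct.map (e0 k V) (E k V)

@[simp] lemma E3_tmul (x y z : TensorAlgebra k V) :
    E3 k V (x ⊗ₜ[k] (y ⊗ₜ[k] z)) = e0 k V x • (e0 k V y • TensorAlgebra.ιInv z) := by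
  simp only [E3, LinearMap.coe_comp, Function.comp_apply, LinearEquiv.coe_coe,
    TensorProduct.map_tmul, E_tmul, TensorProduct.lid_tmul]

section
variable (A : Type*) [Ring A] [Algebra k A]

lemma p12_tmul (x y z : A) :
    DoubleBrackets.p12 k A (x ⊗ₜ[k] (y ⊗ₜ[k] z)) = y ⊗ₜ[k] (x ⊗ₜ[k] z) := by
  simp [DoubleBrackets.p12, DoubleBrackets.tau]

lemma p123_tmul (x y z : A) :
    DoubleBrackets.p123 k A (x ⊗ₜ[k] (y ⊗ₜ[k] z)) = z ⊗ₜ[k] (x ⊗ₜ[k] y) := by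
  simp [DoubleBrackets.p123]

lemma p132_tmul (x y z : A) :
    DoubleBrackets.p132 k A (x ⊗ₜ[k] (y ⊗ₜ[k] z)) = y ⊗ₜ[k] (z ⊗ₜ[k] x) := by
  simp [DoubleBrackets.p132]

lemma applyLeft_tmul (D : A →ₗ[k] (A →ₗ[k] (A ⊗[k] A))) (a x y : A) :
    DoubleBrackets.applyLeft k A D a (x ⊗ₜ[k] y) =
      (TensorProduct.assoc k A A A).toLinearMap ((D a x) ⊗ₜ[k] y) := by
  simp [DoubleBrackets.applyLeft]

lemma assocL_tmul (x y z : A) :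
    (TensorProduct.assoc k A A A).toLinearMap ((x ⊗ₜ[k] y) ⊗ₜ[k] z) = x ⊗ₜ[k] (y ⊗ₜ[k] z) :=
  TensorProduct.assoc_tmul x y z

end

end PreLieAux

/-- Any linear right double Poisson bracket on the tensor algebra `T(V)` is of the form
`{{a,b}} = 1 ⊗ μ(a,b) - μ(b,a) ⊗ 1` for a unique bilinear map `μ`, which is moreover a left
pre-Lie product on `V`. -/
theorem linear_right_double_poisson_bracket_classification
    (k : Type*) [Field k] [CharZero k]
    (V : Type*) [AddCommGroup V] [Module k V] [FiniteDimensional k V]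
    (D : TensorAlgebra k V →ₗ[k] (TensorAlgebra k V →ₗ[k]
          (TensorAlgebra k V ⊗[k] TensorAlgebra k V)))
    (hD : IsRightDoublePoissonBracket k (TensorAlgebra k V) D)
    (hlin : ∀ a b : V, ∃ u v : V,
      D (ι k a) (ι k b) =
        (1 : TensorAlgebra k V) ⊗ₜ[k] ι k u + ι k v ⊗ₜ[k] (1 : TensorAlgebra k V)) :
    ∃ μ : V →ₗ[k] (V →ₗ[k] V),
      (∀ a b : V, D (ι k a) (ι k b) =
        (1 : TensorAlgebra k V) ⊗ₜ[k] ι k (μ a b)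
          - ι k (μ b a) ⊗ₜ[k] (1 : TensorAlgebra k V)) ∧
      (∀ a b c : V, μ (μ a b) c - μ a (μ b c) = μ (μ b a) c - μ b (μ a c)) ∧
      (∀ μ' : V →ₗ[k] (V →ₗ[k] V),
        (∀ a b : V, D (ι k a) (ι k b) =
          (1 : TensorAlgebra k V) ⊗ₜ[k] ι k (μ' a b)
            - ι k (μ' b a) ⊗ₜ[k] (1 : TensorAlgebra k V)) → μ' = μ) := by
  classical
  obtain ⟨⟨hskew, hleib⟩, hjac⟩ := hD
  -- `D x 1 = 0`
  have hD1 : ∀ x : TensorAlgebra k V, D x (1 : TensorAlgebra k V) = 0 := by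
    intro x
    have h := hleib x 1 1
    rw [one_mul, LinearMap.mulRight_one, LinearMap.mulLeft_one, TensorProduct.map_id,
      LinearMap.id_apply] at h
    exact (right_eq_add.mp h)
  set μ : V →ₗ[k] V →ₗ[k] V :=
    ((D ∘ₗ TensorAlgebra.ι k).compl₂ (TensorAlgebra.ι k)).compr₂ (PreLieAux.E k V) with hμdef
  have hμ : ∀ a b : V,
      μ a b = PreLieAux.E k V (D (TensorAlgebra.ι k a) (TensorAlgebra.ι k b)) :=
    fun _ _ => rfl
  have hform : ∀ a b : V, D (ι k a) (ι k b) =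
      (1 : TensorAlgebra k V) ⊗ₜ[k] ι k (μ a b)
        - ι k (μ b a) ⊗ₜ[k] (1 : TensorAlgebra k V) := by
    intro a b
    obtain ⟨u, v, huv⟩ := hlin a b
    have h1 : μ a b = u := by
      rw [hμ, huv]; simp
    have h2 : μ b a = -v := by
      rw [hμ, hskew (ι k b) (ι k a), huv]
      simp [DoubleBrackets.tau]
    rw [huv, h1, h2, LinearMap.map_neg, TensorProduct.neg_tmul, sub_neg_eq_add]
  have happly : ∀ x y z : V,
      applyLeft k (TensorAlgebra k V) D (ι k x) (D (ι k y) (ι k z)) =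
        ι k (μ (μ z y) x) ⊗ₜ[k] ((1 : TensorAlgebra k V) ⊗ₜ[k] (1 : TensorAlgebra k V))
        - (1 : TensorAlgebra k V) ⊗ₜ[k]
            (ι k (μ x (μ z y)) ⊗ₜ[k] (1 : TensorAlgebra k V)) := by
    intro x y z
    rw [hform y z, LinearMap.map_sub, PreLieAux.applyLeft_tmul, PreLieAux.applyLeft_tmul, hD1,
      TensorProduct.zero_tmul, LinearMap.map_zero, hform x (μ z y), TensorProduct.sub_tmul,
      LinearMap.map_sub, PreLieAux.assocL_tmul, PreLieAux.assocL_tmul, zero_sub, neg_sub]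
  have hpre : ∀ a b c : V, μ (μ a b) c - μ a (μ b c) = μ (μ b a) c - μ b (μ a c) := by
    intro a b c
    have h := congrArg (PreLieAux.E3 k V) (hjac (ι k a) (ι k b) (ι k c))
    rw [LinearMap.map_sub, LinearMap.map_zero] at h
    simp only [DoubleBrackets.Jac, happly, LinearMap.map_add, LinearMap.map_sub,
      PreLieAux.p12_tmul, PreLieAux.p123_tmul, PreLieAux.p132_tmul,
      PreLieAux.E3_tmul, PreLieAux.e0_one, PreLieAux.e0_ι, PreLieAux.e1_one, PreLieAux.e1_ι,
      one_smul, zero_smul, smul_zero, sub_zero, zero_sub, neg_neg, neg_zero, zero_add,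
      add_zero, zero_sub, sub_neg_eq_add] at h
    have h2 : μ (μ b a) c - μ b (μ a c) - (μ (μ a b) c - μ a (μ b c)) = 0 := by
      rw [← h]; abel
    exact (sub_eq_zero.mp h2).symm
  refine ⟨μ, hform, hpre, ?_⟩
  intro μ' hμ'
  ext a b
  have h := congrArg (PreLieAux.E k V) ((hμ' a b).symm.trans (hform a b))
  simpa using h
end
end

section
/- Let k be a field of characteristic zero, V a k-vector space, and · , {−,−} : V×V → V bilinear maps. In A = T(V), define D_id and D_(12) on pairs (u,w) with u ∈ V and w ∈ k·1 ⊕ V by D_id(u,1) = D_(12)(u,1) = 0, D_id(u,v) = 1⊗{u,v} − {v,u}⊗1 and D_(12)(u,v) = 1⊗(u·v) − (v·u)⊗1 for u,v ∈ V. For a,b,c ∈ V set T1 := D_(12)(a, D_id'(b,c))⊗D_id''(b,c), T2 := (13)·(D_id'(c,a)⊗D_(12)(b, D_id''(c,a))), T3 := (132)·(D_id(c, D_(12)'(a,b))⊗D_(12)''(a,b)), T4 := (23)·(D_(12)'(a,b)⊗D_id(c, D_(12)''(a,b))) (all well defined since every first Sweedler component lies in k·1 ⊕ V). Then T1 + T2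 + T3 + T4 = 1⊗1⊗({b·a,c} − {a·b,c}) + 1⊗({c,a·b} − a·{c,b} − {c,a}·b)⊗1 + ({c,b}·a + b·{c,a} − {c,b·a})⊗1⊗1 in A^⊗3. In particular, if (V, ·, {−,−}) is a Poisson-left-pre-Lie algebra then T1+T2+T3+T4 = 0 for all a,b,c ∈ V. -/
open TensorProduct

noncomputable section

namespace DoubleBrackets

variable (k : Type*) [Field k] (A : Type*) [Ring A] [Algebra k A]

/-- `(23)·(x⊗y⊗z) = x⊗z⊗y`. -/
def p23 : (A ⊗[k] (A ⊗[k] A)) →ₗ[k] (A ⊗[k] (A ⊗[k] A)) :=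
  TensorProduct.map LinearMap.id (tau k A)

/-- `(13)·(x⊗y⊗z) = z⊗y⊗x`. -/
def p13 : (A ⊗[k] (A ⊗[k] A)) →ₗ[k] (A ⊗[k] (A ⊗[k] A)) :=
  p12 k A ∘ₗ p23 k A ∘ₗ p12 k A

/-- For a linear map `F : A → A ⊗ A`, the map `x ⊗ y ↦ F(x) ⊗ y`, used to form `D(a,ξ')⊗ξ''`. -/
def applyLeft' (F : A →ₗ[k] (A ⊗[k] A)) :
    (A ⊗[k] A) →ₗ[k] (A ⊗[k] (A ⊗[k] A)) :=
  (TensorProduct.assoc k A A A).toLinearMap ∘ₗ TensorProduct.map F LinearMap.id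

/-- For a linear map `F : A → A ⊗ A`, the map `x ⊗ y ↦ x ⊗ F(y)`, used to form `ξ'⊗D(a,ξ'')`. -/
def applyRight' (F : A →ₗ[k] (A ⊗[k] A)) :
    (A ⊗[k] A) →ₗ[k] (A ⊗[k] (A ⊗[k] A)) :=
  TensorProduct.map LinearMap.id F

end DoubleBrackets

/-- A Poisson-left-pre-Lie algebra structure on `V`. -/
def IsPoissonLeftPreLie (k V : Type*) [Field k] [AddCommGroup V] [Module k V]
    (mul br : V →ₗ[k] (V →ₗ[k] V)) : Prop :=
  (∀ a b c : V, mul (mul a b) c = mul a (mul b c)) ∧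
  (∀ a b c : V, br (br a b) c - br a (br b c) = br (br b a) c - br b (br a c)) ∧
  (∀ a b c : V, br (mul a b) c = br (mul b a) c) ∧
  (∀ a b c : V, br a (mul b c) = mul (br a b) c + mul b (br a c))

open DoubleBrackets TensorAlgebra

/-- For the linear brackets `D_id(u,v) = 1⊗{u,v} − {v,u}⊗1` and `D₍₁₂₎(u,v) = 1⊗u·v − v·u⊗1`
on `T(V)` (encoded by families of linear maps prescribed on `k·1 ⊕ V`), the cross-Jacobi sum
`T1+T2+T3+T4` equals
`1⊗1⊗({b·a,c}−{a·b,c}) + 1⊗({c,a·b}−a·{c,b}−{c,a}·b)⊗1 + ({c,b}·a+b·{c,a}−{c,b·a})⊗1⊗1`;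
in particular it vanishes whenever `(V, ·, {−,−})` is a Poisson-left-pre-Lie algebra. -/
theorem cross_jacobi_sum_of_linear_coupled_pair
    (k : Type*) [Field k] [CharZero k]
    (V : Type*) [AddCommGroup V] [Module k V]
    (mul br : V →ₗ[k] (V →ₗ[k] V))
    (Didext D12ext : V → (TensorAlgebra k V →ₗ[k]
        (TensorAlgebra k V ⊗[k] TensorAlgebra k V)))
    (hDid1 : ∀ u : V, Didext u (1 : TensorAlgebra k V) = 0)
    (hD121 : ∀ u : V, D12ext u (1 : TensorAlgebra k V) = 0)
    (hDidι : ∀ u v : V, Didext u (ι k v) =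
      (1 : TensorAlgebra k V) ⊗ₜ[k] ι k (br u v)
        - ι k (br v u) ⊗ₜ[k] (1 : TensorAlgebra k V))
    (hD12ι : ∀ u v : V, D12ext u (ι k v) =
      (1 : TensorAlgebra k V) ⊗ₜ[k] ι k (mul u v)
        - ι k (mul v u) ⊗ₜ[k] (1 : TensorAlgebra k V)) :
    (∀ a b c : V,
      applyLeft' k (TensorAlgebra k V) (D12ext a)
          ((1 : TensorAlgebra k V) ⊗ₜ[k] ι k (br b c)
            - ι k (br c b) ⊗ₜ[k] (1 : TensorAlgebra k V))
        + p13 k (TensorAlgebra k V)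
            (applyRight' k (TensorAlgebra k V) (D12ext b)
              ((1 : TensorAlgebra k V) ⊗ₜ[k] ι k (br c a)
                - ι k (br a c) ⊗ₜ[k] (1 : TensorAlgebra k V)))
        + p132 k (TensorAlgebra k V)
            (applyLeft' k (TensorAlgebra k V) (Didext c)
              ((1 : TensorAlgebra k V) ⊗ₜ[k] ι k (mul a b)
                - ι k (mul b a) ⊗ₜ[k] (1 : TensorAlgebra k V)))
        + p23 k (TensorAlgebra k V)
            (applyRight' k (TensorAlgebra k V) (Didext c)
              ((1 : TensorAlgebra k V) ⊗ₜ[k] ι k (mul a b)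
                - ι k (mul b a) ⊗ₜ[k] (1 : TensorAlgebra k V)))
      = (1 : TensorAlgebra k V) ⊗ₜ[k] ((1 : TensorAlgebra k V) ⊗ₜ[k]
            ι k (br (mul b a) c - br (mul a b) c))
        + (1 : TensorAlgebra k V) ⊗ₜ[k]
            (ι k (br c (mul a b) - mul a (br c b) - mul (br c a) b)
              ⊗ₜ[k] (1 : TensorAlgebra k V))
        + ι k (mul (br c b) a + mul b (br c a) - br c (mul b a)) ⊗ₜ[k]
            ((1 : TensorAlgebra k V) ⊗ₜ[k] (1 : TensorAlgebra k V))) ∧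
    (IsPoissonLeftPreLie k V mul br →
      ∀ a b c : V,
      applyLeft' k (TensorAlgebra k V) (D12ext a)
          ((1 : TensorAlgebra k V) ⊗ₜ[k] ι k (br b c)
            - ι k (br c b) ⊗ₜ[k] (1 : TensorAlgebra k V))
        + p13 k (TensorAlgebra k V)
            (applyRight' k (TensorAlgebra k V) (D12ext b)
              ((1 : TensorAlgebra k V) ⊗ₜ[k] ι k (br c a)
                - ι k (br a c) ⊗ₜ[k] (1 : TensorAlgebra k V)))
        + p132 k (TensorAlgebra k V)
            (applyLeft' k (TensorAlgebra k V) (Didext c)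
              ((1 : TensorAlgebra k V) ⊗ₜ[k] ι k (mul a b)
                - ι k (mul b a) ⊗ₜ[k] (1 : TensorAlgebra k V)))
        + p23 k (TensorAlgebra k V)
            (applyRight' k (TensorAlgebra k V) (Didext c)
              ((1 : TensorAlgebra k V) ⊗ₜ[k] ι k (mul a b)
                - ι k (mul b a) ⊗ₜ[k] (1 : TensorAlgebra k V))) = 0) := by
  constructor
  · intro a b c
    simp only [applyLeft', applyRight', p13, p12, p23, p132, tau, LinearMap.comp_apply,
      LinearEquiv.coe_coe, map_sub, TensorProduct.map_tmul, LinearMap.id_coe, id_eq,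
      TensorProduct.tmul_sub, TensorProduct.sub_tmul, hDidι, hD12ι, hDid1, hD121,
      TensorProduct.assoc_tmul, TensorProduct.assoc_symm_tmul, TensorProduct.comm_tmul,
      TensorProduct.tmul_zero, TensorProduct.zero_tmul, LinearMap.map_zero, LinearEquiv.map_zero, LinearMap.map_add, LinearEquiv.map_add,
      TensorProduct.add_tmul, TensorProduct.tmul_add]
    abel
  · intro hP a b c
    obtain ⟨-, -, hcomm, hleib⟩ := hP
    simp only [applyLeft', applyRight', p13, p12, p23, p132, tau, LinearMap.comp_apply,
      LinearEquiv.coe_coe, map_sub, TensorProduct.map_tmul, LinearMap.id_coe, id_eq,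
      TensorProduct.tmul_sub, TensorProduct.sub_tmul, hDidι, hD12ι, hDid1, hD121,
      TensorProduct.assoc_tmul, TensorProduct.assoc_symm_tmul, TensorProduct.comm_tmul,
      TensorProduct.tmul_zero, TensorProduct.zero_tmul, LinearMap.map_zero,
      LinearEquiv.map_zero]
    rw [hcomm b a c, hleib c a b, hleib c b a]
    simp only [map_add, TensorProduct.tmul_add, TensorProduct.add_tmul]
    abel
end
end

section
/- In Mat_3(k)⊗Mat_3(k) over a field k of characteristic zero, set R_1 := E_32∧E_31 and, for arbitrary scalars a_7, a_8, a_9, a_10 ∈ k, r := (a_7(E_11+E_22+E_33) + a_8(E_11−E_22) + a_9 E_32 + a_10 E_21) ∧ E_31. Then r satisfies the classical Yang–Baxter equation and [R_1^12, r^13 + r^23] = 0 in Mat_3(k)^⊗3. -/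
open TensorProduct

set_option synthInstance.maxHeartbeats 1000000

noncomputable section

namespace MatYB

variable (k : Type*) [Field k] (m : ℕ)

/-- The `m×m` matrix algebra over `k`. -/
abbrev M := Matrix (Fin m) (Fin m) k

/-- Matrix units `E i j`. -/
def E (i j : Fin m) : M k m := Matrix.single i j 1

/-- `A ∧ B = A ⊗ B - B ⊗ A`. -/
def wedge (A B : M k m) : M k m ⊗[k] M k m := A ⊗ₜ[k] B - B ⊗ₜ[k] A

/-- `ρ¹² = Σ Aₛ ⊗ Bₛ ⊗ 1` for `ρ = Σ Aₛ ⊗ Bₛ`. -/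
def u12 (ρ : M k m ⊗[k] M k m) : M k m ⊗[k] (M k m ⊗[k] M k m) :=
  TensorProduct.map LinearMap.id ((TensorProduct.mk k (M k m) (M k m)).flip 1) ρ

/-- `ρ¹³ = Σ Aₛ ⊗ 1 ⊗ Bₛ` for `ρ = Σ Aₛ ⊗ Bₛ`. -/
def u13 (ρ : M k m ⊗[k] M k m) : M k m ⊗[k] (M k m ⊗[k] M k m) :=
  TensorProduct.map LinearMap.id (TensorProduct.mk k (M k m) (M k m) 1) ρ

/-- `ρ²³ = Σ 1 ⊗ Aₛ ⊗ Bₛ` for `ρ = Σ Aₛ ⊗ Bₛ`. -/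
def u23 (ρ : M k m ⊗[k] M k m) : M k m ⊗[k] (M k m ⊗[k] M k m) :=
  (1 : M k m) ⊗ₜ[k] ρ

/-- The associative Yang–Baxter equation `ρ¹²ρ¹³ - ρ²³ρ¹² + ρ¹³ρ²³ = 0`. -/
def AYBE (ρ : M k m ⊗[k] M k m) : Prop :=
  u12 k m ρ * u13 k m ρ - u23 k m ρ * u12 k m ρ + u13 k m ρ * u23 k m ρ = 0

/-- The classical Yang–Baxter equation `[ρ¹²,ρ¹³] + [ρ¹²,ρ²³] + [ρ¹³,ρ²³] = 0`. -/
def CYBE (ρ : M k m ⊗[k] M k m) : Prop :=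
  (u12 k m ρ * u13 k m ρ - u13 k m ρ * u12 k m ρ)
    + (u12 k m ρ * u23 k m ρ - u23 k m ρ * u12 k m ρ)
    + (u13 k m ρ * u23 k m ρ - u23 k m ρ * u13 k m ρ) = 0

/-- The compatibility condition `[R¹², r¹³ + r²³] = 0`. -/
def Compat (R r : M k m ⊗[k] M k m) : Prop :=
  u12 k m R * (u13 k m r + u23 k m r) - (u13 k m r + u23 k m r) * u12 k m R = 0

end MatYB

open MatYB

section Aux

set_option maxHeartbeats 4000000
set_option synthInstance.maxHeartbeats 4000000

/-- General CYBE criterion for `A ∧ E` when `AE = c•E`, `EA = d•E`, `E² = 0`. -/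
lemma aux_cybe_of (k : Type*) [Field k] (m : ℕ) (A Ee : M k m) (c d : k)
    (h1 : A * Ee = c • Ee) (h2 : Ee * A = d • Ee) (h3 : Ee * Ee = 0) :
    CYBE k m (wedge k m A Ee) := by
  unfold CYBE u12 u13 u23 wedge
  have hsub : ∀ x y z : M k m ⊗[k] (M k m ⊗[k] M k m), (x - y) * z = x*z - y*z :=
    fun x y z => sub_mul x y z
  have hsub' : ∀ x y z : M k m ⊗[k] (M k m ⊗[k] M k m), x * (y - z) = x*y - x*z :=
    fun x y z => mul_sub x y z
  have hmul : ∀ a b : M k m, ∀ c d : M k m ⊗[k] M k m,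
      (a ⊗ₜ[k] c) * (b ⊗ₜ[k] d) = (a*b) ⊗ₜ[k] (c*d) :=
    fun a b c d => Algebra.TensorProduct.tmul_mul_tmul a b c d
  have hmulI : ∀ a b c d : M k m,
      (a ⊗ₜ[k] b : M k m ⊗[k] M k m) * (c ⊗ₜ[k] d) = (a*c) ⊗ₜ[k] (b*d) :=
    fun a b c d => Algebra.TensorProduct.tmul_mul_tmul a c b d
  have hs1 : ∀ (r : k) (x : M k m) (y : M k m ⊗[k] M k m),
      (r • x) ⊗ₜ[k] y = r • (x ⊗ₜ[k] y) := fun r x y => (TensorProduct.smul_tmul' r x y).symm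
  have hs1i : ∀ (r : k) (x y : M k m),
      ((r • x) ⊗ₜ[k] y : M k m ⊗[k] M k m) = r • (x ⊗ₜ[k] y) :=
    fun r x y => (TensorProduct.smul_tmul' r x y).symm
  have hs2 : ∀ (r : k) (x : M k m) (y : M k m ⊗[k] M k m),
      x ⊗ₜ[k] (r • y) = r • (x ⊗ₜ[k] y) := fun r x y => TensorProduct.tmul_smul r x y
  have hs2i : ∀ (r : k) (x y : M k m),
      (x ⊗ₜ[k] (r • y) : M k m ⊗[k] M k m) = r • (x ⊗ₜ[k] y) :=
    fun r x y => TensorProduct.tmul_smul r x y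
  simp only [map_sub, TensorProduct.map_tmul, TensorProduct.mk_apply,
    LinearMap.flip_apply, LinearMap.id_coe, id_eq, TensorProduct.tmul_sub,
    hsub, hsub', hmul, hmulI, one_mul, mul_one, h1, h2, h3,
    hs1, hs1i, hs2, hs2i,
    TensorProduct.tmul_zero, TensorProduct.zero_tmul, smul_zero]
  module

/-- General compatibility criterion for `R = B ∧ E`, `r = A ∧ E`. -/
lemma aux_compat_of (k : Type*) [Field k] (m : ℕ) (A Ee B : M k m) (c p q t : k)
    (h1 : A * Ee = c • Ee) (h2 : Ee * A = (p + c - q) • Ee) (h3 : Ee * Ee = 0)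
    (h4 : B * Ee = 0) (h5 : Ee * B = 0)
    (h6 : A * B = p • B) (h7 : B * A = q • B + t • Ee) :
    Compat k m (wedge k m B Ee) (wedge k m A Ee) := by
  unfold Compat u12 u13 u23 wedge
  have hsub : ∀ x y z : M k m ⊗[k] (M k m ⊗[k] M k m), (x - y) * z = x*z - y*z :=
    fun x y z => sub_mul x y z
  have hsub' : ∀ x y z : M k m ⊗[k] (M k m ⊗[k] M k m), x * (y - z) = x*y - x*z :=
    fun x y z => mul_sub x y z
  have hadd : ∀ x y z : M k m ⊗[k] (M k m ⊗[k] M k m), (x + y) * z = x*z + y*z :=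
    fun x y z => Distrib.right_distrib x y z
  have hadd' : ∀ x y z : M k m ⊗[k] (M k m ⊗[k] M k m), x * (y + z) = x*y + x*z :=
    fun x y z => Distrib.left_distrib x y z
  have hmul : ∀ a b : M k m, ∀ c d : M k m ⊗[k] M k m,
      (a ⊗ₜ[k] c) * (b ⊗ₜ[k] d) = (a*b) ⊗ₜ[k] (c*d) :=
    fun a b c d => Algebra.TensorProduct.tmul_mul_tmul a b c d
  have hmulI : ∀ a b c d : M k m,
      (a ⊗ₜ[k] b : M k m ⊗[k] M k m) * (c ⊗ₜ[k] d) = (a*c) ⊗ₜ[k] (b*d) :=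
    fun a b c d => Algebra.TensorProduct.tmul_mul_tmul a c b d
  have hs1 : ∀ (r : k) (x : M k m) (y : M k m ⊗[k] M k m),
      (r • x) ⊗ₜ[k] y = r • (x ⊗ₜ[k] y) := fun r x y => (TensorProduct.smul_tmul' r x y).symm
  have hs1i : ∀ (r : k) (x y : M k m),
      ((r • x) ⊗ₜ[k] y : M k m ⊗[k] M k m) = r • (x ⊗ₜ[k] y) :=
    fun r x y => (TensorProduct.smul_tmul' r x y).symm
  have hs2 : ∀ (r : k) (x : M k m) (y : M k m ⊗[k] M k m),
      x ⊗ₜ[k] (r • y) = r • (x ⊗ₜ[k] y) := fun r x y => TensorProduct.tmul_smul r x y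
  have hs2i : ∀ (r : k) (x y : M k m),
      (x ⊗ₜ[k] (r • y) : M k m ⊗[k] M k m) = r • (x ⊗ₜ[k] y) :=
    fun r x y => TensorProduct.tmul_smul r x y
  simp only [map_sub, TensorProduct.map_tmul, TensorProduct.mk_apply,
    LinearMap.flip_apply, LinearMap.id_coe, id_eq, TensorProduct.tmul_sub,
    TensorProduct.tmul_add, TensorProduct.add_tmul,
    hsub, hsub', hadd, hadd', hmul, hmulI, one_mul, mul_one,
    h1, h2, h3, h4, h5, h6, h7,
    hs1, hs1i, hs2, hs2i,
    TensorProduct.tmul_zero, TensorProduct.zero_tmul, smul_zero]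
  module

end Aux

set_option maxHeartbeats 4000000
set_option synthInstance.maxHeartbeats 4000000

/-- Case A.2 on `k³`: `r_{A.2} = (a₇(E₁₁+E₂₂+E₃₃) + a₈(E₁₁−E₂₂) + a₉E₃₂ + a₁₀E₂₁)∧E₃₁`
satisfies the CYBE and is compatible with `R₁ = E₃₂∧E₃₁`. -/
theorem case_A2 (k : Type*) [Field k] [CharZero k] (a₇ a₈ a₉ a₁₀ : k) :
    CYBE k 3
      (wedge k 3
        (a₇ • (E k 3 0 0 + E k 3 1 1 + E k 3 2 2) + a₈ • (E k 3 0 0 - E k 3 1 1)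
          + a₉ • E k 3 2 1 + a₁₀ • E k 3 1 0)
        (E k 3 2 0)) ∧
    Compat k 3 (wedge k 3 (E k 3 2 1) (E k 3 2 0))
      (wedge k 3
        (a₇ • (E k 3 0 0 + E k 3 1 1 + E k 3 2 2) + a₈ • (E k 3 0 0 - E k 3 1 1)
          + a₉ • E k 3 2 1 + a₁₀ • E k 3 1 0)
        (E k 3 2 0)) := by
  set A : M k 3 := a₇ • (E k 3 0 0 + E k 3 1 1 + E k 3 2 2) + a₈ • (E k 3 0 0 - E k 3 1 1)
      + a₉ • E k 3 2 1 + a₁₀ • E k 3 1 0 with hA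
  have h1 : A * E k 3 2 0 = a₇ • E k 3 2 0 := by
    ext i j
    fin_cases i <;> fin_cases j <;>
      simp [hA, E, Matrix.mul_apply, Fin.sum_univ_three, Matrix.single] <;> ring
  have h2 : E k 3 2 0 * A = (a₇ + a₈) • E k 3 2 0 := by
    ext i j
    fin_cases i <;> fin_cases j <;>
      simp [hA, E, Matrix.mul_apply, Fin.sum_univ_three, Matrix.single] <;> ring
  have h3 : E k 3 2 0 * E k 3 2 0 = 0 := by
    ext i j
    fin_cases i <;> fin_cases j <;>
      simp [E, Matrix.mul_apply, Fin.sum_univ_three, Matrix.single]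
  have h4 : E k 3 2 1 * E k 3 2 0 = 0 := by
    ext i j
    fin_cases i <;> fin_cases j <;>
      simp [E, Matrix.mul_apply, Fin.sum_univ_three, Matrix.single]
  have h5 : E k 3 2 0 * E k 3 2 1 = 0 := by
    ext i j
    fin_cases i <;> fin_cases j <;>
      simp [E, Matrix.mul_apply, Fin.sum_univ_three, Matrix.single]
  have h6 : A * E k 3 2 1 = a₇ • E k 3 2 1 := by
    ext i j
    fin_cases i <;> fin_cases j <;>
      simp [hA, E, Matrix.mul_apply, Fin.sum_univ_three, Matrix.single] <;> ring
  have h7 : E k 3 2 1 * A = (a₇ - a₈) • E k 3 2 1 + a₁₀ • E k 3 2 0 := by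
    ext i j
    fin_cases i <;> fin_cases j <;>
      simp [hA, E, Matrix.mul_apply, Fin.sum_univ_three, Matrix.single] <;> ring
  exact ⟨aux_cybe_of k 3 A (E k 3 2 0) a₇ (a₇ + a₈) h1 h2 h3,
    aux_compat_of k 3 A (E k 3 2 0) (E k 3 2 1) a₇ a₇ (a₇ - a₈) a₁₀
      h1 (by rw [h2]; ring_nf) h3 h4 h5 h6 h7⟩
end
end

section
/- Let k be a field of characteristic zero, n ≥ 2, and λ_1,…,λ_n ∈ k pairwise distinct. Let V = k^n with standard basis e_1,…,e_n. Define the linear map R : V⊗V → V⊗V by R(e_i⊗e_j) = (λ_i−λ_j)^{-1}(e_i⊗e_j + e_j⊗e_i − e_i⊗e_i − e_j⊗e_j) for i ≠ j and R(e_i⊗e_i) = 0, and define X ∈ End(V) by X e_i = Σ_{m≠i} (λ_i−λ_m)^{-1}(e_m − e_i). Then R commutes with X⊗id_V + id_V⊗X, i.e. R∘(X⊗id_V + id_V⊗X) = (X⊗id_V + id_V⊗X)∘R as linear maps on V⊗V. -/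
open TensorProduct

set_option maxHeartbeats 1600000
set_option synthInstance.maxHeartbeats 400000

private theorem RcommS_term_id {k : Type*} [Field k] {M : Type*} [AddCommGroup M] [Module k M]
    (x y z : k) (hxy : x - y ≠ 0) (hxz : x - z ≠ 0) (hyz : y - z ≠ 0)
    (Eii Eij Eim Eji Ejj Ejm Emi Emj Emm : M) :
    (x - z)⁻¹ • ((z - y)⁻¹ • (Emj + Ejm - Emm - Ejj) - (x - y)⁻¹ • (Eij + Eji - Eii - Ejj))
      + (y - z)⁻¹ • ((x - z)⁻¹ • (Eim + Emi - Eii - Emm) - (x - y)⁻¹ • (Eij + Eji - Eii - Ejj))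
    = (-(x - y)⁻¹) •
        ((x - z)⁻¹ • (Emi - Emj - Eii + Eij + Eim - Eii - Ejm + Eji)
          - (y - z)⁻¹ • (Emi - Emj - Eji + Ejj + Eim - Eij - Ejm + Ejj)) := by
  have hzy : z - y ≠ 0 := fun h => hyz (by linear_combination -h)
  match_scalars <;> field_simp <;> first | ring1 | (left; ring1)

/-- For pairwise distinct `λ₁,…,λₙ`, the operator `R` on `kⁿ ⊗ kⁿ` with
`R(eᵢ⊗eⱼ) = (λᵢ−λⱼ)⁻¹(eᵢ⊗eⱼ + eⱼ⊗eᵢ − eᵢ⊗eᵢ − eⱼ⊗eⱼ)` (and `R(eᵢ⊗eᵢ)=0`) commutes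
with `X⊗id + id⊗X`, where `X eᵢ = Σ_{m≠i} (λᵢ−λₘ)⁻¹(eₘ − eᵢ)`. -/
theorem R_commutes_with_S
    (k : Type*) [Field k] [CharZero k] (n : ℕ) (hn : 2 ≤ n)
    (lam : Fin n → k) (hlam : Function.Injective lam)
    (R : ((Fin n → k) ⊗[k] (Fin n → k)) →ₗ[k] ((Fin n → k) ⊗[k] (Fin n → k)))
    (hRdiag : ∀ i : Fin n, R (Pi.single i (1 : k) ⊗ₜ[k] Pi.single i (1 : k)) = 0)
    (hRoff : ∀ i j : Fin n, i ≠ j →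
      R (Pi.single i (1 : k) ⊗ₜ[k] Pi.single j (1 : k)) =
        (lam i - lam j)⁻¹ •
          (Pi.single i (1 : k) ⊗ₜ[k] Pi.single j (1 : k)
            + Pi.single j (1 : k) ⊗ₜ[k] Pi.single i (1 : k)
            - Pi.single i (1 : k) ⊗ₜ[k] Pi.single i (1 : k)
            - Pi.single j (1 : k) ⊗ₜ[k] Pi.single j (1 : k)))
    (X : (Fin n → k) →ₗ[k] (Fin n → k))
    (hX : ∀ i : Fin n, X (Pi.single i (1 : k)) =
      ∑ m ∈ Finset.univ.erase i, (lam i - lam m)⁻¹ • (Pi.single m (1 : k) - Pi.single i (1 : k))) :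
    R ∘ₗ (TensorProduct.map X LinearMap.id + TensorProduct.map LinearMap.id X)
      = (TensorProduct.map X LinearMap.id + TensorProduct.map LinearMap.id X) ∘ₗ R := by
  classical
  have hne : ∀ p q : Fin n, p ≠ q → lam p - lam q ≠ 0 :=
    fun p q h => sub_ne_zero_of_ne fun hl => h (hlam hl)
  apply ((Pi.basisFun k (Fin n)).tensorProduct (Pi.basisFun k (Fin n))).ext
  rintro ⟨i, j⟩
  simp only [Module.Basis.tensorProduct_apply, Pi.basisFun_apply, LinearMap.comp_apply,
    LinearMap.add_apply, TensorProduct.map_tmul, LinearMap.id_coe, id_eq, map_add]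
  by_cases hij : i = j
  · subst hij
    rw [hRdiag i, map_zero, map_zero, add_zero]
    rw [hX i]
    simp only [TensorProduct.sum_tmul, TensorProduct.tmul_sum, ← TensorProduct.smul_tmul',
      TensorProduct.tmul_smul, TensorProduct.sub_tmul, TensorProduct.tmul_sub,
      map_sum, map_smul, map_sub, hRdiag i, sub_zero]
    rw [← Finset.sum_add_distrib]
    refine Finset.sum_eq_zero fun m hm => ?_
    have hmi : m ≠ i := Finset.ne_of_mem_erase hm
    rw [hRoff m i hmi, hRoff i m (Ne.symm hmi)]
    have h1 := hne m i hmi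
    have h2 := hne i m (Ne.symm hmi)
    match_scalars <;> field_simp <;> ring1
  · -- i ≠ j
    have hji : j ∈ Finset.univ.erase i := Finset.mem_erase.mpr ⟨Ne.symm hij, Finset.mem_univ j⟩
    have hij' : i ∈ Finset.univ.erase j := Finset.mem_erase.mpr ⟨hij, Finset.mem_univ i⟩
    have hjs : j ∉ (Finset.univ.erase i).erase j := Finset.notMem_erase j _
    have his : i ∉ (Finset.univ.erase i).erase j :=
      fun h => Finset.notMem_erase i _ (Finset.mem_of_mem_erase h)
    have hins1 : Finset.univ.erase i = insert j ((Finset.univ.erase i).erase j) :=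
      (Finset.insert_erase hji).symm
    have hins2 : (Finset.univ.erase j : Finset (Fin n))
        = insert i ((Finset.univ.erase i).erase j) := by
      rw [Finset.erase_right_comm]
      exact (Finset.insert_erase hij').symm
    have hflip : (lam j - lam i)⁻¹ = -(lam i - lam j)⁻¹ := by
      rw [← inv_neg, neg_sub]
    -- Step 1: the LHS as a sum over m ∉ {i,j}
    have h1 : R (X (Pi.single i (1:k)) ⊗ₜ[k] Pi.single j (1:k))
          + R (Pi.single i (1:k) ⊗ₜ[k] X (Pi.single j (1:k)))
        = ∑ m ∈ (Finset.univ.erase i).erase j,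
            ((lam i - lam m)⁻¹ • (R (Pi.single m (1:k) ⊗ₜ[k] Pi.single j (1:k))
                - R (Pi.single i (1:k) ⊗ₜ[k] Pi.single j (1:k)))
              + (lam j - lam m)⁻¹ • (R (Pi.single i (1:k) ⊗ₜ[k] Pi.single m (1:k))
                - R (Pi.single i (1:k) ⊗ₜ[k] Pi.single j (1:k)))) := by
      rw [hX i, hX j]
      simp only [TensorProduct.sum_tmul, TensorProduct.tmul_sum, ← TensorProduct.smul_tmul',
        TensorProduct.tmul_smul, TensorProduct.sub_tmul, TensorProduct.tmul_sub,
        map_sum, map_smul, map_sub]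
      conv_lhs => rw [hins1, hins2, Finset.sum_insert hjs, Finset.sum_insert his]
      rw [hRdiag i, hRdiag j, hflip, Finset.sum_add_distrib]
      module
    -- the value of R on e_i ⊗ e_j in "rank one" form
    have hRv : R (Pi.single i (1:k) ⊗ₜ[k] Pi.single j (1:k))
        = (-(lam i - lam j)⁻¹) •
            ((Pi.single i (1:k) - Pi.single j (1:k)) ⊗ₜ[k]
              (Pi.single i (1:k) - Pi.single j (1:k))) := by
      rw [hRoff i j hij]
      simp only [TensorProduct.sub_tmul, TensorProduct.tmul_sub]
      module
    -- X applied to e_i - e_j, boundary terms cancel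
    have hXv : X (Pi.single i (1:k) - Pi.single j (1:k))
        = ∑ m ∈ (Finset.univ.erase i).erase j,
            ((lam i - lam m)⁻¹ • (Pi.single m (1:k) - Pi.single i (1:k))
              - (lam j - lam m)⁻¹ • (Pi.single m (1:k) - Pi.single j (1:k))) := by
      rw [map_sub, hX i, hX j]
      conv_lhs => rw [hins1, hins2, Finset.sum_insert hjs, Finset.sum_insert his]
      rw [hflip, Finset.sum_sub_distrib]
      module
    -- Step 2: the RHS as a sum over m ∉ {i,j}
    have h2 : TensorProduct.map X LinearMap.id (R (Pi.single i (1:k) ⊗ₜ[k] Pi.single j (1:k)))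
          + TensorProduct.map LinearMap.id X (R (Pi.single i (1:k) ⊗ₜ[k] Pi.single j (1:k)))
        = ∑ m ∈ (Finset.univ.erase i).erase j,
            ((-(lam i - lam j)⁻¹) •
              ((lam i - lam m)⁻¹ •
                (Pi.single m (1:k) ⊗ₜ[k] Pi.single i (1:k)
                  - Pi.single m (1:k) ⊗ₜ[k] Pi.single j (1:k)
                  - Pi.single i (1:k) ⊗ₜ[k] Pi.single i (1:k)
                  + Pi.single i (1:k) ⊗ₜ[k] Pi.single j (1:k)
                  + Pi.single i (1:k) ⊗ₜ[k] Pi.single m (1:k)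
                  - Pi.single i (1:k) ⊗ₜ[k] Pi.single i (1:k)
                  - Pi.single j (1:k) ⊗ₜ[k] Pi.single m (1:k)
                  + Pi.single j (1:k) ⊗ₜ[k] Pi.single i (1:k))
              - (lam j - lam m)⁻¹ •
                (Pi.single m (1:k) ⊗ₜ[k] Pi.single i (1:k)
                  - Pi.single m (1:k) ⊗ₜ[k] Pi.single j (1:k)
                  - Pi.single j (1:k) ⊗ₜ[k] Pi.single i (1:k)
                  + Pi.single j (1:k) ⊗ₜ[k] Pi.single j (1:k)
                  + Pi.single i (1:k) ⊗ₜ[k] Pi.single m (1:k)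
                  - Pi.single i (1:k) ⊗ₜ[k] Pi.single j (1:k)
                  - Pi.single j (1:k) ⊗ₜ[k] Pi.single m (1:k)
                  + Pi.single j (1:k) ⊗ₜ[k] Pi.single j (1:k)))) := by
      rw [hRv, map_smul, map_smul, TensorProduct.map_tmul, TensorProduct.map_tmul,
        LinearMap.id_coe, id_eq, hXv]
      rw [TensorProduct.sum_tmul, TensorProduct.tmul_sum,
        ← smul_add, ← Finset.sum_add_distrib, Finset.smul_sum]
      refine Finset.sum_congr rfl fun m hm => ?_
      simp only [TensorProduct.sub_tmul, TensorProduct.tmul_sub, ← TensorProduct.smul_tmul',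
        TensorProduct.tmul_smul]
      module
    rw [h1, h2]
    refine Finset.sum_congr rfl fun m hm => ?_
    have hmj : m ≠ j := (Finset.mem_erase.mp hm).1
    have hmi : m ≠ i := Finset.ne_of_mem_erase (Finset.mem_of_mem_erase hm)
    rw [hRoff m j hmj, hRoff i m (Ne.symm hmi), hRoff i j hij]
    exact RcommS_term_id (lam i) (lam j) (lam m) (hne i j hij) (hne i m (Ne.symm hmi))
      (hne j m (Ne.symm hmj)) _ _ _ _ _ _ _ _ _
end

section
/- Let k be a field of characteristic zero, n ≥ 1, A = k[x_1,…,x_n] the polynomial algebra, and M = A^n (n-tuples of polynomials, identified with the A-module of derivations of A via the i-th component corresponding to ∂/∂x_i). Equip M with the componentwise product (f·g)_j := f_j g_j and the bilinear bracket {f,g}_j := Σ_{i=1}^n f_i · ∂(g_j)/∂x_i. Then (M, ·, {−,−}) is a Poisson-left-pre-Lie algebra: · is associative, the associator {{f,g},h} − {f,{g,h}} is symmetric in f and g, {f·g,h} = {g·f,h}, and {f,g·h} = {f,g}·h + g·{f,h} for all f,g,h ∈ M. -/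
open MvPolynomial

private lemma pderiv_comm' {σ R : Type*} [DecidableEq σ] [CommSemiring R]
    (i l : σ) (p : MvPolynomial σ R) :
    pderiv i (pderiv l p) = pderiv l (pderiv i p) := by
  induction p using MvPolynomial.induction_on' with
  | add p q hp hq => simp [hp, hq]
  | monomial u a =>
    rcases eq_or_ne i l with rfl | hil
    · rfl
    · simp only [pderiv_monomial]
      rw [Finsupp.tsub_apply, Finsupp.tsub_apply, Finsupp.single_apply,
        Finsupp.single_apply, if_neg hil, if_neg (Ne.symm hil), Nat.sub_zero, Nat.sub_zero,
        tsub_right_comm]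
      ring_nf

/-- The module of derivations of `k[x₁,…,xₙ]`, identified with `n`-tuples of polynomials,
with the componentwise product `(f·g)ⱼ = fⱼgⱼ` and the pre-Lie bracket
`{f,g}ⱼ = Σᵢ fᵢ ∂(gⱼ)/∂xᵢ`, is a Poisson-left-pre-Lie algebra. -/
theorem derivations_of_polynomials_poisson_left_pre_lie
    (k : Type*) [Field k] [CharZero k] (n : ℕ) (hn : 1 ≤ n) :
    let br : (Fin n → MvPolynomial (Fin n) k) → (Fin n → MvPolynomial (Fin n) k) →
        (Fin n → MvPolynomial (Fin n) k) :=
      fun f g j => ∑ i : Fin n, f i * MvPolynomial.pderiv i (g j)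
    (∀ f g h : Fin n → MvPolynomial (Fin n) k, (f * g) * h = f * (g * h)) ∧
    (∀ f g h : Fin n → MvPolynomial (Fin n) k,
      br (br f g) h - br f (br g h) = br (br g f) h - br g (br f h)) ∧
    (∀ f g h : Fin n → MvPolynomial (Fin n) k, br (f * g) h = br (g * f) h) ∧
    (∀ f g h : Fin n → MvPolynomial (Fin n) k,
      br f (g * h) = br f g * h + g * br f h) := by
  intro br
  have key : ∀ (f g h : Fin n → MvPolynomial (Fin n) k) (j : Fin n),
      br (br f g) h j - br f (br g h) j
        = -∑ i : Fin n, ∑ l : Fin n, f i * g l * pderiv i (pderiv l (h j)) := by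
    intro f g h j
    show (∑ i : Fin n, (∑ l : Fin n, f l * pderiv l (g i)) * pderiv i (h j))
        - (∑ i : Fin n, f i * pderiv i (∑ l : Fin n, g l * pderiv l (h j))) = _
    simp only [map_sum, pderiv_mul, Finset.sum_mul, Finset.mul_sum, mul_add]
    rw [Finset.sum_comm (s := Finset.univ) (t := Finset.univ)
      (f := fun i l => f l * pderiv l (g i) * pderiv i (h j))]
    rw [← Finset.sum_sub_distrib, ← Finset.sum_neg_distrib]
    refine Finset.sum_congr rfl fun i _ => ?_
    rw [← Finset.sum_sub_distrib, ← Finset.sum_neg_distrib]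
    refine Finset.sum_congr rfl fun l _ => ?_
    ring
  refine ⟨fun f g h => mul_assoc f g h, ?_, ?_, ?_⟩
  · intro f g h
    funext j
    have h1 := key f g h j
    have h2 := key g f h j
    simp only [Pi.sub_apply]
    rw [h1, h2, neg_inj]
    rw [Finset.sum_comm]
    refine Finset.sum_congr rfl fun i _ => Finset.sum_congr rfl fun l _ => ?_
    rw [pderiv_comm', mul_comm (f l) (g i)]
  · intro f g h
    funext j
    show ∑ i : Fin n, (f i * g i) * pderiv i (h j) = ∑ i : Fin n, (g i * f i) * pderiv i (h j)
    refine Finset.sum_congr rfl fun i _ => by ring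
  · intro f g h
    funext j
    show (∑ i : Fin n, f i * pderiv i (g j * h j)) = _
    simp only [pderiv_mul, Pi.add_apply, Pi.mul_apply]
    show _ = (∑ i : Fin n, f i * pderiv i (g j)) * h j + g j * ∑ i : Fin n, f i * pderiv i (h j)
    rw [Finset.sum_mul, Finset.mul_sum, ← Finset.sum_add_distrib]
    refine Finset.sum_congr rfl fun i _ => by ring
end

section
/- Let k be a field of characteristic zero and n ≥ 4. Let U ⊂ Mat_n(k) be the subspace of strictly upper-triangular matrices (a ∈ U iff a_{ij} = 0 whenever i ≥ j), and fix x ∈ Mat_n(k) supported on the (n−3)-rd superdiagonal, i.e. x_{ij} = 0 unless j = i + n − 3. Define {a,b} := a(xb − bx) for a,b ∈ U. Then {a,b} ∈ U for all a,b ∈ U, and (U, matrix multiplication, {−,−}) is a Poisson-left-pre-Lie algebra: the associator {{a,b},c} − {a,{b,c}} is symmetric in a and b, {ab,c} = {ba,c}, and {a,bc} = {a,b}c + b{a,c} for all a,b,c ∈ U. -/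
/-- Let `U ⊂ Matₙ(k)` be the strictly upper-triangular matrices and `x` a matrix supported
on the `(n−3)`-rd superdiagonal (`n ≥ 4`). With `{a,b} := a(xb − bx)`, `U` is closed under
multiplication and under `{−,−}`, and `(U, matrix multiplication, {−,−})` is a
Poisson-left-pre-Lie algebra: the associator of `{−,−}` is symmetric in its first two
arguments, `{ab,c} = {ba,c}`, and `{a,bc} = {a,b}c + b{a,c}`. -/
theorem strictly_upper_triangular_poisson_left_pre_lie
    (k : Type*) [Field k] [CharZero k] (n : ℕ) (hn : 4 ≤ n)
    (x : Matrix (Fin n) (Fin n) k)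
    (hx : ∀ i j : Fin n, (j : ℕ) ≠ (i : ℕ) + (n - 3) → x i j = 0) :
    let SU : Matrix (Fin n) (Fin n) k → Prop := fun a => ∀ i j : Fin n, j ≤ i → a i j = 0
    let br : Matrix (Fin n) (Fin n) k → Matrix (Fin n) (Fin n) k → Matrix (Fin n) (Fin n) k :=
      fun a b => a * (x * b - b * x)
    (∀ a b : Matrix (Fin n) (Fin n) k, SU a → SU b → SU (a * b)) ∧
    (∀ a b : Matrix (Fin n) (Fin n) k, SU a → SU b → SU (br a b)) ∧
    (∀ a b c : Matrix (Fin n) (Fin n) k, SU a → SU b → SU c →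
      br (br a b) c - br a (br b c) = br (br b a) c - br b (br a c)) ∧
    (∀ a b c : Matrix (Fin n) (Fin n) k, SU a → SU b → SU c →
      br (a * b) c = br (b * a) c) ∧
    (∀ a b c : Matrix (Fin n) (Fin n) k, SU a → SU b → SU c →
      br a (b * c) = br a b * c + b * br a c) := by
  intro SU br
  -- gap predicate: `a i j = 0` whenever `j < i + d`
  have Gmul : ∀ (d₁ d₂ : ℕ) (a b : Matrix (Fin n) (Fin n) k),
      (∀ i j : Fin n, (j : ℕ) < (i : ℕ) + d₁ → a i j = 0) →
      (∀ i j : Fin n, (j : ℕ) < (i : ℕ) + d₂ → b i j = 0) →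
      (∀ i j : Fin n, (j : ℕ) < (i : ℕ) + (d₁ + d₂) → (a * b) i j = 0) := by
    intro d₁ d₂ a b ha hb i j hij
    rw [Matrix.mul_apply]
    apply Finset.sum_eq_zero
    intro l _
    by_cases h : (l : ℕ) < (i : ℕ) + d₁
    · rw [ha i l h, zero_mul]
    · rw [hb l j (by omega), mul_zero]
  have Gsub : ∀ (d : ℕ) (a b : Matrix (Fin n) (Fin n) k),
      (∀ i j : Fin n, (j : ℕ) < (i : ℕ) + d → a i j = 0) →
      (∀ i j : Fin n, (j : ℕ) < (i : ℕ) + d → b i j = 0) →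
      (∀ i j : Fin n, (j : ℕ) < (i : ℕ) + d → (a - b) i j = 0) := by
    intro d a b ha hb i j hij
    simp [Matrix.sub_apply, ha i j hij, hb i j hij]
  have Gmono : ∀ (d d' : ℕ) (a : Matrix (Fin n) (Fin n) k), d' ≤ d →
      (∀ i j : Fin n, (j : ℕ) < (i : ℕ) + d → a i j = 0) →
      (∀ i j : Fin n, (j : ℕ) < (i : ℕ) + d' → a i j = 0) := by
    intro d d' a hdd ha i j hij
    exact ha i j (by omega)
  have Gzero : ∀ (d : ℕ) (a : Matrix (Fin n) (Fin n) k), n ≤ d →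
      (∀ i j : Fin n, (j : ℕ) < (i : ℕ) + d → a i j = 0) → a = 0 := by
    intro d a hd ha
    ext i j
    have := j.isLt
    simpa using ha i j (by omega)
  have hxg : ∀ i j : Fin n, (j : ℕ) < (i : ℕ) + (n - 3) → x i j = 0 := by
    intro i j h
    exact hx i j (by omega)
  have hSU : ∀ a : Matrix (Fin n) (Fin n) k, SU a →
      ∀ i j : Fin n, (j : ℕ) < (i : ℕ) + 1 → a i j = 0 := by
    intro a ha i j hij
    exact ha i j (Fin.le_def.mpr (by omega))
  -- the commutator-like part `x*b - b*x` has gap `n-2`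
  have hcomm : ∀ b : Matrix (Fin n) (Fin n) k, SU b →
      ∀ i j : Fin n, (j : ℕ) < (i : ℕ) + (n - 2) → (x * b - b * x) i j = 0 := by
    intro b hb
    apply Gsub
    · exact Gmono _ _ _ (by omega) (Gmul (n - 3) 1 x b hxg (hSU b hb))
    · exact Gmono _ _ _ (by omega) (Gmul 1 (n - 3) b x (hSU b hb) hxg)
  -- `br a b` has gap `n-1`
  have hbr : ∀ a b : Matrix (Fin n) (Fin n) k, SU a → SU b →
      ∀ i j : Fin n, (j : ℕ) < (i : ℕ) + (n - 1) → br a b i j = 0 := by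
    intro a b ha hb
    exact Gmono _ _ _ (by omega)
      (Gmul 1 (n - 2) a (x * b - b * x) (hSU a ha) (hcomm b hb))
  have hbrSU : ∀ a b : Matrix (Fin n) (Fin n) k, SU a → SU b → SU (br a b) := by
    intro a b ha hb i j hij
    have : (j : ℕ) ≤ (i : ℕ) := Fin.le_def.mp hij
    exact hbr a b ha hb i j (by omega)
  refine ⟨?_, hbrSU, ?_, ?_, ?_⟩
  · -- product of strictly upper triangular is strictly upper triangular
    intro a b ha hb i j hij
    have : (j : ℕ) ≤ (i : ℕ) := Fin.le_def.mp hij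
    exact Gmul 1 1 a b (hSU a ha) (hSU b hb) i j (by omega)
  · -- associator symmetry: all iterated brackets vanish
    have h1 : ∀ a b c : Matrix (Fin n) (Fin n) k, SU a → SU b → SU c →
        br (br a b) c = 0 := by
      intro a b c ha hb hc
      exact Gzero (n - 1 + (n - 2)) _ (by omega)
        (Gmul (n - 1) (n - 2) _ _ (hbr a b ha hb) (hcomm c hc))
    have h2 : ∀ a b c : Matrix (Fin n) (Fin n) k, SU a → SU b → SU c →
        br a (br b c) = 0 := by
      intro a b c ha hb hc
      apply Gzero (1 + (2 * n - 4)) _ (by omega)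
      apply Gmul 1 (2 * n - 4) a _ (hSU a ha)
      apply Gsub
      · exact Gmono _ _ _ (by omega)
          (Gmul (n - 3) (n - 1) x _ hxg (hbr b c hb hc))
      · exact Gmono _ _ _ (by omega)
          (Gmul (n - 1) (n - 3) _ x (hbr b c hb hc) hxg)
    intro a b c ha hb hc
    rw [h1 a b c ha hb hc, h2 a b c ha hb hc, h1 b a c hb ha hc, h2 b a c hb ha hc]
  · -- {ab,c} = {ba,c}: both sides vanish
    intro a b c ha hb hc
    have hab : ∀ a b : Matrix (Fin n) (Fin n) k, SU a → SU b → br (a * b) c = 0 := by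
      intro a b ha hb
      exact Gzero (1 + 1 + (n - 2)) _ (by omega)
        (Gmul (1 + 1) (n - 2) _ _ (Gmul 1 1 a b (hSU a ha) (hSU b hb)) (hcomm c hc))
    rw [hab a b ha hb, hab b a hb ha]
  · -- Leibniz: both sides vanish
    intro a b c ha hb hc
    have hL : br a (b * c) = 0 := by
      apply Gzero (1 + (n - 1)) _ (by omega)
      apply Gmul 1 (n - 1) a _ (hSU a ha)
      apply Gsub
      · exact Gmono _ _ _ (by omega)
          (Gmul (n - 3) (1 + 1) x _ hxg (Gmul 1 1 b c (hSU b hb) (hSU c hc)))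
      · exact Gmono _ _ _ (by omega)
          (Gmul (1 + 1) (n - 3) _ x (Gmul 1 1 b c (hSU b hb) (hSU c hc)) hxg)
    have hR1 : br a b * c = 0 :=
      Gzero (n - 1 + 1) _ (by omega)
        (Gmul (n - 1) 1 _ c (hbr a b ha hb) (hSU c hc))
    have hR2 : b * br a c = 0 :=
      Gzero (1 + (n - 1)) _ (by omega)
        (Gmul 1 (n - 1) b _ (hSU b hb) (hbr a c ha hc))
    rw [hL, hR1, hR2, add_zero]
end
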